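/- (Massart's lemma.) Let m ≥ 1 and let A be a nonempty finite subset of ℝ^m. Then R̂(A) ≤ (max_{v ∈ A} ‖v‖₂) · √(2·log|A|) / m, where ‖v‖₂ is the Euclidean norm and |A| is the cardinality of A. -/

import Mathlib

open Finset

/-- The empirical Rademacher complexity of a set `A ⊆ ℝ^m`. -/
noncomputable def radComp (m : ℕ) (A : Set (Fin m → ℝ)) : ℝ :=
  ((2 : ℝ) ^ m)⁻¹ * ∑ ε : Fin m → Bool,
    sSup ((fun v => (1 / (m : ℝ)) * ∑ i, (if ε i then (1 : ℝ) else -1) * v i) '' A)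

private lemma sum_sign_zero (m : ℕ) (i : Fin m) :
    ∑ ε : Fin m → Bool, (if ε i then (1:ℝ) else -1) = 0 := by
  classical
  have he : Function.Involutive (fun ε : Fin m → Bool => Function.update ε i (!ε i)) := by
    intro ε; funext j
    by_cases h : j = i
    · subst h; simp
    · simp [Function.update_of_ne h]
  have h1 : ∑ ε : Fin m → Bool, (if (Function.update ε i (!ε i)) i then (1:ℝ) else -1)
      = ∑ ε : Fin m → Bool, (if ε i then (1:ℝ) else -1) :=
    Fintype.sum_bijective _ he.bijective _ _ (fun _ => rfl)
  have h2 : ∀ ε : Fin m → Bool,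
      (if (Function.update ε i (!ε i)) i then (1:ℝ) else -1)
        = -(if ε i then (1:ℝ) else -1) := by
    intro ε; rw [Function.update_self]; cases hεi : ε i <;> simp
  rw [Finset.sum_congr rfl (fun ε _ => h2 ε), Finset.sum_neg_distrib] at h1
  linarith

private lemma sum_exp_sign (m : ℕ) (f : Fin m → ℝ) :
    ∑ ε : Fin m → Bool, ∏ i, Real.exp ((if ε i then (1:ℝ) else -1) * f i)
      = ∏ i, (Real.exp (f i) + Real.exp (-f i)) := by
  classical
  have h := Finset.prod_univ_sum (fun _ : Fin m => (Finset.univ : Finset Bool))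
    (fun i b => Real.exp ((if b then (1:ℝ) else -1) * f i))
  rw [Fintype.piFinset_univ] at h
  rw [← h]
  refine Finset.prod_congr rfl fun i _ => ?_
  simp

/-- Massart's lemma. -/
theorem stmt10 (m : ℕ) (hm : 1 ≤ m) (A : Set (Fin m → ℝ)) (hA : A.Nonempty)
    (hAf : A.Finite) :
    radComp m A ≤
      sSup ((fun v => Real.sqrt (∑ i, (v i) ^ 2)) '' A) *
        Real.sqrt (2 * Real.log (hAf.toFinset.card)) / m := by
  classical
  have hSmem : ∀ v, v ∈ hAf.toFinset ↔ v ∈ A := fun v => hAf.mem_toFinset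
  have hm' : (0:ℝ) < m := by exact_mod_cast hm
  by_cases hsub : A.Subsingleton
  · -- singleton case: both sides are zero
    obtain ⟨v, hv⟩ := hA
    have hAeq : A = {v} := Set.eq_singleton_iff_unique_mem.mpr ⟨hv, fun w hw => hsub hw hv⟩
    subst hAeq
    have hcard : hAf.toFinset.card = 1 :=
      Finset.card_eq_one.mpr ⟨v, by ext w; simp [hSmem w]⟩
    have hrad : radComp m {v} = 0 := by
      unfold radComp
      simp only [Set.image_singleton, csSup_singleton]
      rw [← Finset.mul_sum]
      have hz : ∑ ε : Fin m → Bool, ∑ i, (if ε i then (1:ℝ) else -1) * v i = 0 := by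
        rw [Finset.sum_comm]
        refine Finset.sum_eq_zero fun i _ => ?_
        rw [← Finset.sum_mul, sum_sign_zero, zero_mul]
      rw [hz, mul_zero, mul_zero]
    rw [hrad, hcard]
    simp
  · -- main case
    obtain ⟨u, hu, w, hw, huw⟩ := Set.not_subsingleton_iff.mp hsub
    set S := hAf.toFinset with hSdef
    have hSne : S.Nonempty := ⟨u, (hSmem u).2 hu⟩
    have hN2 : 1 < S.card := Finset.one_lt_card.mpr ⟨u, (hSmem u).2 hu, w, (hSmem w).2 hw, huw⟩
    have hSmem' : ∀ v, v ∈ S ↔ v ∈ A := fun v => hSdef ▸ hSmem v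
    clear_value S
    set r := sSup ((fun v => Real.sqrt (∑ i, (v i) ^ 2)) '' A) with hrdef
    clear_value r
    have hr_ub : ∀ v ∈ A, Real.sqrt (∑ i, (v i) ^ 2) ≤ r := fun v hv => by
      rw [hrdef]; exact le_csSup ((hAf.image _).bddAbove) ⟨v, hv, rfl⟩
    have hr_pos : 0 < r := by
      have hvz : u ≠ 0 ∨ w ≠ 0 := by
        by_contra h
        push_neg at h
        exact huw (h.1.trans h.2.symm)
      obtain ⟨v0, hv0A, hv0⟩ : ∃ v0 ∈ A, v0 ≠ 0 := by
        rcases hvz with h | h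
        · exact ⟨u, hu, h⟩
        · exact ⟨w, hw, h⟩
      obtain ⟨i, hi⟩ := Function.ne_iff.mp hv0
      have hpos : 0 < ∑ j, (v0 j) ^ 2 := by
        refine Finset.sum_pos' (fun j _ => sq_nonneg _) ⟨i, Finset.mem_univ i, ?_⟩
        have : v0 i ≠ 0 := hi
        positivity
      exact lt_of_lt_of_le (Real.sqrt_pos.mpr hpos) (hr_ub v0 hv0A)
    set L := Real.log (S.card : ℝ) with hLdef
    clear_value L
    have hL : 0 < L := by rw [hLdef]; exact Real.log_pos (by exact_mod_cast hN2)
    set s2 := Real.sqrt (2 * L) with hs2def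
    clear_value s2
    have hsq : s2 ^ 2 = 2 * L := by rw [hs2def]; exact Real.sq_sqrt (by linarith)
    have hsqrt_pos : 0 < s2 := by rw [hs2def]; exact Real.sqrt_pos.mpr (by linarith)
    set t := m * s2 / r with htdef
    clear_value t
    have ht : 0 < t := by rw [htdef]; exact div_pos (mul_pos hm' hsqrt_pos) hr_pos
    -- per ε bound
    have key1 : ∀ ε : Fin m → Bool,
        Real.exp (t * sSup ((fun v => (1 / (m : ℝ)) * ∑ i, (if ε i then (1:ℝ) else -1) * v i) '' A))
          ≤ ∑ v ∈ S, Real.exp ((t / m) * ∑ i, (if ε i then (1:ℝ) else -1) * v i) := by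
      intro ε
      set Z := ∑ v ∈ S, Real.exp ((t / m) * ∑ i, (if ε i then (1:ℝ) else -1) * v i) with hZdef
      clear_value Z
      have hZ : 0 < Z := by
        rw [hZdef]; exact Finset.sum_pos (fun v _ => Real.exp_pos _) hSne
      have h1 : sSup ((fun v => (1 / (m : ℝ)) * ∑ i, (if ε i then (1:ℝ) else -1) * v i) '' A)
          ≤ Real.log Z / t := by
        refine csSup_le (hA.image _) ?_
        rintro x ⟨v, hv, rfl⟩
        have hle : Real.exp ((t / m) * ∑ i, (if ε i then (1:ℝ) else -1) * v i) ≤ Z := by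
          rw [hZdef]
          apply Finset.single_le_sum
            (f := fun w => Real.exp ((t / m) * ∑ i, (if ε i then (1:ℝ) else -1) * w i))
            _ ((hSmem' v).2 hv)
          exact fun w _ => (Real.exp_pos _).le
        have h2 : (t / m) * ∑ i, (if ε i then (1:ℝ) else -1) * v i ≤ Real.log Z :=
          (Real.le_log_iff_exp_le hZ).mpr hle
        rw [le_div_iff₀ ht]
        have heq : ((1 / (m : ℝ)) * ∑ i, (if ε i then (1:ℝ) else -1) * v i) * t
            = (t / m) * ∑ i, (if ε i then (1:ℝ) else -1) * v i := by ring
        linarith [heq]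
      have h3 := mul_le_mul_of_nonneg_left h1 ht.le
      have h4 : t * (Real.log Z / t) = Real.log Z := by field_simp
      calc Real.exp (t * sSup ((fun v => (1 / (m : ℝ)) * ∑ i, (if ε i then (1:ℝ) else -1) * v i) '' A))
          ≤ Real.exp (Real.log Z) := Real.exp_le_exp.mpr (by linarith)
        _ = Z := Real.exp_log hZ
    -- per v bound
    have key2 : ∀ v ∈ S,
        ∑ ε : Fin m → Bool, Real.exp ((t / m) * ∑ i, (if ε i then (1:ℝ) else -1) * v i)
          ≤ 2 ^ m * Real.exp ((t / m) ^ 2 * r ^ 2 / 2) := by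
      intro v hv
      have hexpand : ∀ ε : Fin m → Bool,
          Real.exp ((t / m) * ∑ i, (if ε i then (1:ℝ) else -1) * v i)
            = ∏ i, Real.exp ((if ε i then (1:ℝ) else -1) * ((t / m) * v i)) := by
        intro ε
        rw [Finset.mul_sum, Real.exp_sum]
        exact Finset.prod_congr rfl fun i _ => by congr 1; ring
      rw [Finset.sum_congr rfl fun ε _ => hexpand ε, sum_exp_sign]
      have hstep : ∏ i, (Real.exp ((t / m) * v i) + Real.exp (-((t / m) * v i)))
          ≤ ∏ i, (2 * Real.exp (((t / m) * v i) ^ 2 / 2)) := by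
        refine Finset.prod_le_prod (fun i _ => by positivity) fun i _ => ?_
        have hc := Real.cosh_le_exp_half_sq ((t / m) * v i)
        rw [Real.cosh_eq] at hc
        linarith
      refine hstep.trans ?_
      rw [Finset.prod_mul_distrib, Finset.prod_const, Finset.card_univ, Fintype.card_fin,
        ← Real.exp_sum]
      have hv2 : ∑ i, (v i) ^ 2 ≤ r ^ 2 := by
        have h1 := hr_ub v ((hSmem' v).1 hv)
        have h2 : Real.sqrt (∑ i, (v i) ^ 2) ^ 2 = ∑ i, (v i) ^ 2 :=
          Real.sq_sqrt (Finset.sum_nonneg fun i _ => sq_nonneg _)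
        nlinarith [Real.sqrt_nonneg (∑ i, (v i) ^ 2)]
      have hsumle : ∑ i, ((t / m) * v i) ^ 2 / 2 ≤ (t / m) ^ 2 * r ^ 2 / 2 := by
        have heq : ∑ i, ((t / m) * v i) ^ 2 / 2 = (t / m) ^ 2 / 2 * ∑ i, (v i) ^ 2 := by
          rw [Finset.mul_sum]
          exact Finset.sum_congr rfl fun i _ => by ring
        rw [heq]
        nlinarith [sq_nonneg (t / (m:ℝ))]
      exact mul_le_mul_of_nonneg_left (Real.exp_le_exp.mpr hsumle) (by positivity)
    -- Jensen + combination
    have h2m : (0:ℝ) < 2 ^ m := by positivity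
    have hchain : Real.exp (t * radComp m A) ≤ (S.card : ℝ) * Real.exp ((t / m) ^ 2 * r ^ 2 / 2) := by
      have hjensen := (convexOn_exp).map_sum_le
        (t := (Finset.univ : Finset (Fin m → Bool)))
        (w := fun _ => ((2:ℝ) ^ m)⁻¹)
        (p := fun ε => t * sSup ((fun v => (1 / (m : ℝ)) * ∑ i, (if ε i then (1:ℝ) else -1) * v i) '' A))
        (fun _ _ => by positivity)
        (by
          rw [Finset.sum_const, Finset.card_univ, Fintype.card_fun, Fintype.card_bool,
            Fintype.card_fin, nsmul_eq_mul]
          field_simp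
          norm_num)
        (fun _ _ => Set.mem_univ _)
      simp only [smul_eq_mul] at hjensen
      have heq1 : t * radComp m A
          = ∑ ε : Fin m → Bool, ((2:ℝ) ^ m)⁻¹ *
              (t * sSup ((fun v => (1 / (m : ℝ)) * ∑ i, (if ε i then (1:ℝ) else -1) * v i) '' A)) := by
        unfold radComp
        rw [← Finset.mul_sum, ← Finset.mul_sum]
        ring
      calc Real.exp (t * radComp m A)
          ≤ ∑ ε : Fin m → Bool, ((2:ℝ) ^ m)⁻¹ *
              Real.exp (t * sSup ((fun v => (1 / (m : ℝ)) * ∑ i, (if ε i then (1:ℝ) else -1) * v i) '' A)) := by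
            rw [heq1]; exact hjensen
        _ ≤ ∑ ε : Fin m → Bool, ((2:ℝ) ^ m)⁻¹ *
              ∑ v ∈ S, Real.exp ((t / m) * ∑ i, (if ε i then (1:ℝ) else -1) * v i) := by
            refine Finset.sum_le_sum fun ε _ => ?_
            exact mul_le_mul_of_nonneg_left (key1 ε) (by positivity)
        _ = ((2:ℝ) ^ m)⁻¹ * ∑ v ∈ S, ∑ ε : Fin m → Bool,
              Real.exp ((t / m) * ∑ i, (if ε i then (1:ℝ) else -1) * v i) := by
            rw [← Finset.mul_sum, Finset.sum_comm]
        _ ≤ ((2:ℝ) ^ m)⁻¹ * ∑ _v ∈ S, (2:ℝ) ^ m * Real.exp ((t / m) ^ 2 * r ^ 2 / 2) := by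
            refine mul_le_mul_of_nonneg_left (Finset.sum_le_sum key2) (by positivity)
        _ = (S.card : ℝ) * Real.exp ((t / m) ^ 2 * r ^ 2 / 2) := by
            rw [Finset.sum_const, nsmul_eq_mul]
            field_simp
    have hcpos : (0:ℝ) < S.card := by exact_mod_cast Nat.lt_of_lt_of_le Nat.zero_lt_one hN2.le
    have h5 : t * radComp m A ≤ L + (t / m) ^ 2 * r ^ 2 / 2 := by
      have hlog := Real.log_le_log (Real.exp_pos _) hchain
      rw [Real.log_exp, Real.log_mul (ne_of_gt hcpos) (ne_of_gt (Real.exp_pos _)),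
        Real.log_exp, ← hLdef] at hlog
      exact hlog
    have h6 : (t / m) ^ 2 * r ^ 2 / 2 = L := by
      rw [htdef]
      field_simp
      linear_combination hsq
    have h7 : radComp m A ≤ 2 * L / t := by
      rw [le_div_iff₀ ht]
      have : t * radComp m A ≤ 2 * L := by rw [h6] at h5; linarith
      linarith [mul_comm t (radComp m A)]
    refine h7.trans (le_of_eq ?_)
    rw [htdef]
    field_simp
    linear_combination (-1:ℝ) * hsq
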